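/- Let α be a type of ground atoms, let A be a set of atoms, let R be a set of full ground rules over α each of whose head family Q is a singleton {H}, and for a set F of atoms let cl_R(F) be the least superset of F that is closed under R (i.e., the intersection of all supersets C of F such that B ⊆ C implies H ⊆ C for every rule (B, {H}) ∈ R). Then F is disclosable (there exists F' with F ⊆ F' ⊆ A and F' satisfies R) if and only if cl_R(F) ⊆ A. -/
import Mathlib


/-- A ground rule: a finite body and a family of finite head images. -/
structure GroundRule (α : Type*) where
  body : Finset α
  heads : Set (Finset α)

/-- A set of atoms `C` satisfies a ground rule `(B, Q)` if `B ⊆ C` implies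
that `I ⊆ C` for some `I ∈ Q`. -/
def RuleSat {α : Type*} (C : Set α) (r : GroundRule α) : Prop :=
  ↑r.body ⊆ C → ∃ I ∈ r.heads, ↑I ⊆ C

/-- `C` satisfies a set of ground rules if it satisfies every rule in it. -/
def SatisfiesSet {α : Type*} (C : Set α) (R : Set (GroundRule α)) : Prop :=
  ∀ r ∈ R, RuleSat C r

/-- A censor for an ambient set `A` and rules `R` is a subset of `A` satisfying `R`. -/
def Censor {α : Type*} (A : Set α) (R : Set (GroundRule α)) (C : Set α) : Prop :=
  C ⊆ A ∧ SatisfiesSet C R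

/-- An optimal censor is a censor that is maximal w.r.t. set inclusion. -/
def OptimalCensor {α : Type*} (A : Set α) (R : Set (GroundRule α)) (C : Set α) : Prop :=
  Censor A R C ∧ ∀ C', Censor A R C' → C ⊆ C' → C' = C

/-- The least superset of `F` closed under the (singleton-headed) rules of `R`. -/
def clR {α : Type*} (R : Set (GroundRule α)) (F : Set α) : Set α :=
  ⋂₀ {C | F ⊆ C ∧ ∀ r ∈ R, ↑r.body ⊆ C → ∀ H ∈ r.heads, ↑H ⊆ C}

/-- for rules whose head family is a singleton, `F` is disclosable
iff its closure under the rules is contained in the ambient set `A`. -/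
theorem stmt4 {α : Type*} (A F : Set α) (R : Set (GroundRule α))
    (hfull : ∀ r ∈ R, ∃ H, r.heads = {H}) :
    (∃ F', F ⊆ F' ∧ F' ⊆ A ∧ SatisfiesSet F' R) ↔ clR R F ⊆ A := by
  constructor
  · rintro ⟨F', hFF', hF'A, hsat⟩
    have hmem : F' ∈ {C | F ⊆ C ∧ ∀ r ∈ R, ↑r.body ⊆ C → ∀ H ∈ r.heads, ↑H ⊆ C} := by
      refine ⟨hFF', fun r hr hb H hH => ?_⟩
      obtain ⟨H', hH'⟩ := hfull r hr
      obtain ⟨I, hI, hIsub⟩ := hsat r hr hb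
      rw [hH'] at hH hI
      simp at hH hI
      rwa [hH, ← hI]
    exact fun x hx => hF'A (Set.sInter_subset_of_mem hmem hx)
  · intro hcl
    refine ⟨clR R F, fun x hx => ?_, hcl, fun r hr hb => ?_⟩
    · exact fun C hC => hC.1 hx
    · obtain ⟨H, hH⟩ := hfull r hr
      refine ⟨H, by simp [hH], fun x hx C hC => ?_⟩
      exact hC.2 r hr (fun y hy => hb hy C hC) H (by simp [hH]) hx
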